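/- With X_1,…,X_k i.i.d. uniform on a set of size m and C the number of pairwise collisions, Var[C] ≤ binom(k,2)/m + k³/m², and hence by Chebyshev's inequality, for any ε > 0, Pr[|C − binom(k,2)/m| ≥ ε·binom(k,2)/m] ≤ (1/ε²)·O(m/k² + 1/k). -/

import Mathlib

open MeasureTheory ProbabilityTheory Finset

/-- The number of pairwise collisions among `X₁,…,X_k`. -/
noncomputable def collisionCount {Ω S : Type*} [DecidableEq S] (k : ℕ)
    (X : Fin k → Ω → S) (ω : Ω) : ℝ :=
  ∑ p ∈ Finset.univ.filter (fun p : Fin k × Fin k => p.1 < p.2),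
    (if X p.1 ω = X p.2 ω then (1 : ℝ) else 0)

lemma stmt11_cardP (k : ℕ) :
    ((Finset.univ : Finset (Fin k × Fin k)).filter (fun p => p.1 < p.2)).card = k.choose 2 := by
  rw [Nat.choose_two_right, ← Finset.sum_range_id, ← Fin.sum_univ_eq_sum_range]
  rw [Finset.card_eq_sum_card_fiberwise (f := fun p => p.2) (t := Finset.univ) (by simp)]
  refine Finset.sum_congr rfl fun j _ => ?_
  have : (Finset.univ.filter (fun p : Fin k × Fin k => p.1 < p.2)).filter (fun p => p.2 = j)
      = (Finset.Iio j).map ⟨fun i => (i, j), fun a b h => by simpa using h⟩ := by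
    ext p
    simp only [Finset.mem_filter, Finset.mem_univ, true_and, Finset.mem_map,
      Finset.mem_Iio, Function.Embedding.coeFn_mk]
    constructor
    · rintro ⟨h1, h2⟩
      exact ⟨p.1, by omega, by rw [← h2]; rfl⟩
    · rintro ⟨a, ha, rfl⟩
      exact ⟨ha, rfl⟩
  rw [this, Finset.card_map, Fin.card_Iio]

section aux
variable {Ω S : Type*} [MeasureSpace Ω] [IsProbabilityMeasure (ℙ : Measure Ω)]
    [Fintype S] [DecidableEq S] [MeasurableSpace S] [MeasurableSingletonClass S]
    {k m : ℕ}

set_option linter.unusedSectionVars false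

lemma stmt11_master (hm : 1 ≤ m)
    (X : Fin k → Ω → S)
    (hindep : iIndepFun X ℙ)
    (hunif : ∀ (i : Fin k) (s : S), (ℙ {ω | X i ω = s}).toReal = 1 / m)
    (T : Finset (Fin k)) (f : Fin k → S) :
    ℙ (⋂ i ∈ T, {ω | X i ω = f i}) = ((m : ENNReal)⁻¹) ^ T.card := by
  have h := hindep.meas_biInter (S := T) (s := fun i => {ω | X i ω = f i})
    (fun i _ => ⟨{f i}, measurableSet_singleton _, rfl⟩)
  rw [h]
  rw [Finset.prod_congr rfl (fun i _ => ?_), Finset.prod_const]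
  have h2 : ℙ {ω | X i ω = f i} ≠ ⊤ := measure_ne_top _ _
  rw [← ENNReal.ofReal_toReal h2, hunif i (f i), one_div,
    ENNReal.ofReal_inv_of_pos (Nat.cast_pos.mpr hm), ENNReal.ofReal_natCast]

variable (hmS : Fintype.card S = m) (hm : 1 ≤ m)
    (X : Fin k → Ω → S) (hmeas : ∀ i, Measurable (X i))
    (hindep : iIndepFun X ℙ)
    (hunif : ∀ (i : Fin k) (s : S), (ℙ {ω | X i ω = s}).toReal = 1 / m)

include hmS hm hindep hunif hmeas

lemma stmt11_pairProb {i j : Fin k} (hij : i ≠ j) :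
    ℙ {ω | X i ω = X j ω} = (m : ENNReal)⁻¹ := by
  have hU : {ω | X i ω = X j ω}
      = ⋃ s : S, ⋂ t ∈ ({i, j} : Finset (Fin k)), {ω | X t ω = s} := by
    ext ω
    simp only [Set.mem_setOf_eq, Set.mem_iUnion, Finset.mem_insert, Finset.mem_singleton,
      Set.mem_iInter]
    constructor
    · intro h; exact ⟨X i ω, by rintro t (rfl | rfl) <;> simp [h]⟩
    · rintro ⟨s, hs⟩; rw [hs i (Or.inl rfl), hs j (Or.inr rfl)]
  have hmeasb : ∀ (s : S) (t : Fin k), MeasurableSet {ω | X t ω = s} :=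
    fun s t => (hmeas t) (measurableSet_singleton s)
  have hdisj : Pairwise (Function.onFun Disjoint
      (fun s : S => ⋂ t ∈ ({i, j} : Finset (Fin k)), {ω | X t ω = s})) := by
    intro s t hst
    refine Set.disjoint_left.mpr fun ω hs ht => hst ?_
    simp only [Set.mem_iInter] at hs ht
    rw [← hs i (by simp), ← ht i (by simp)]
  rw [hU, measure_iUnion hdisj (fun s => MeasurableSet.biInter (Set.to_countable _)
    (fun t _ => hmeasb s t))]
  rw [tsum_fintype]
  have hcard : ({i, j} : Finset (Fin k)).card = 2 := by
    rw [Finset.card_insert_of_notMem (by simpa using hij), Finset.card_singleton]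
  calc ∑ s : S, ℙ (⋂ t ∈ ({i, j} : Finset (Fin k)), {ω | X t ω = s})
      = ∑ _s : S, ((m : ENNReal)⁻¹) ^ 2 := by
        refine Finset.sum_congr rfl fun s _ => ?_
        rw [stmt11_master hm X hindep hunif _ (fun _ => s), hcard]
    _ = (m : ENNReal) * ((m : ENNReal)⁻¹) ^ 2 := by
        rw [Finset.sum_const, Finset.card_univ, hmS, nsmul_eq_mul]
    _ = (m : ENNReal)⁻¹ := by
        rw [pow_two, ← mul_assoc, ENNReal.mul_inv_cancel (Nat.cast_ne_zero.mpr (by omega))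
          (ENNReal.natCast_ne_top m), one_mul]

lemma stmt11_l3 {a b c : Fin k} (hab : a ≠ b) (hac : a ≠ c) (hbc : b ≠ c) :
    ℙ {ω | X a ω = X b ω ∧ X a ω = X c ω} ≤ ((m : ENNReal)⁻¹) ^ 2 := by
  have hsub : {ω | X a ω = X b ω ∧ X a ω = X c ω}
      ⊆ ⋃ s : S, ⋂ t ∈ ({a, b, c} : Finset (Fin k)), {ω | X t ω = s} := by
    intro ω ⟨h1, h2⟩
    refine Set.mem_iUnion.mpr ⟨X a ω, Set.mem_iInter.mpr fun t => Set.mem_iInter.mpr fun ht => ?_⟩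
    simp only [Finset.mem_insert, Finset.mem_singleton] at ht
    rcases ht with rfl | rfl | rfl <;> simp [h1.symm, h2.symm]
  have hcard : ({a, b, c} : Finset (Fin k)).card = 3 := by
    rw [Finset.card_insert_of_notMem (by simp [hab, hac]),
      Finset.card_insert_of_notMem (by simpa using hbc), Finset.card_singleton]
  calc ℙ {ω | X a ω = X b ω ∧ X a ω = X c ω}
      ≤ ∑' s : S, ℙ (⋂ t ∈ ({a, b, c} : Finset (Fin k)), {ω | X t ω = s}) :=
        (measure_mono hsub).trans (measure_iUnion_le _)
    _ = ∑ s : S, ((m : ENNReal)⁻¹) ^ 3 := by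
        rw [tsum_fintype]
        exact Finset.sum_congr rfl fun s _ => by
          rw [stmt11_master hm X hindep hunif _ (fun _ => s), hcard]
    _ = (m : ENNReal) * ((m : ENNReal)⁻¹) ^ 3 := by
        rw [Finset.sum_const, Finset.card_univ, hmS, nsmul_eq_mul]
    _ ≤ ((m : ENNReal)⁻¹) ^ 2 := by
        rw [pow_succ' _ 2, ← mul_assoc, ENNReal.mul_inv_cancel
          (Nat.cast_ne_zero.mpr (by omega)) (ENNReal.natCast_ne_top m), one_mul]

lemma stmt11_l4 {a b c d : Fin k} (hab : a ≠ b) (hac : a ≠ c) (had : a ≠ d)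
    (hbc : b ≠ c) (hbd : b ≠ d) (hcd : c ≠ d) :
    ℙ ({ω | X a ω = X b ω} ∩ {ω | X c ω = X d ω}) ≤ ((m : ENNReal)⁻¹) ^ 2 := by
  have hsub : {ω | X a ω = X b ω} ∩ {ω | X c ω = X d ω}
      ⊆ ⋃ st : S × S, ⋂ t ∈ ({a, b, c, d} : Finset (Fin k)),
        {ω | X t ω = (if t = c ∨ t = d then st.2 else st.1)} := by
    intro ω ⟨h1, h2⟩
    refine Set.mem_iUnion.mpr ⟨(X a ω, X c ω),
      Set.mem_iInter.mpr fun t => Set.mem_iInter.mpr fun ht => ?_⟩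
    simp only [Finset.mem_insert, Finset.mem_singleton] at ht
    rcases ht with rfl | rfl | rfl | rfl
    · simp [hac, had]
    · simp [hbc, hbd, h1.symm]
    · simp
    · simp [h2.symm]
  have hcard : ({a, b, c, d} : Finset (Fin k)).card = 4 := by
    rw [Finset.card_insert_of_notMem (by simp [hab, hac, had]),
      Finset.card_insert_of_notMem (by simp [hbc, hbd]),
      Finset.card_insert_of_notMem (by simpa using hcd), Finset.card_singleton]
  calc ℙ ({ω | X a ω = X b ω} ∩ {ω | X c ω = X d ω})
      ≤ ∑' st : S × S, ℙ (⋂ t ∈ ({a, b, c, d} : Finset (Fin k)),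
          {ω | X t ω = (if t = c ∨ t = d then st.2 else st.1)}) :=
        (measure_mono hsub).trans (measure_iUnion_le _)
    _ = ∑ _st : S × S, ((m : ENNReal)⁻¹) ^ 4 := by
        rw [tsum_fintype]
        exact Finset.sum_congr rfl fun st _ => by
          rw [stmt11_master hm X hindep hunif _
            (fun t => if t = c ∨ t = d then st.2 else st.1), hcard]
    _ = ((m : ENNReal) * (m : ENNReal)) * ((m : ENNReal)⁻¹) ^ 4 := by
        rw [Finset.sum_const, Finset.card_univ, Fintype.card_prod, hmS, nsmul_eq_mul]
        push_cast
        ring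
    _ ≤ ((m : ENNReal)⁻¹) ^ 2 := by
        have hm0 : (m : ENNReal) ≠ 0 := Nat.cast_ne_zero.mpr (by omega)
        have hmt : (m : ENNReal) ≠ ⊤ := ENNReal.natCast_ne_top m
        calc ((m : ENNReal) * (m : ENNReal)) * ((m : ENNReal)⁻¹) ^ 4
            = ((m : ENNReal) * (m : ENNReal)⁻¹) * ((m : ENNReal) * (m : ENNReal)⁻¹)
              * ((m : ENNReal)⁻¹) ^ 2 := by ring
          _ = ((m : ENNReal)⁻¹) ^ 2 := by
              rw [ENNReal.mul_inv_cancel hm0 hmt, one_mul, one_mul]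
        exact le_refl _

end aux

/-- For the collision count `C` of `k` i.i.d. samples uniform over a set of size
`m`, `Var[C] ≤ binom(k,2)/m + k³/m²`, and by Chebyshev's inequality
`Pr[|C − binom(k,2)/m| ≥ ε·binom(k,2)/m] ≤ (1/ε²)·O(m/k² + 1/k)`
(with explicit constant 16). -/
theorem stmt11 {Ω : Type*} [MeasureSpace Ω] [IsProbabilityMeasure (ℙ : Measure Ω)]
    {S : Type*} [Fintype S] [DecidableEq S] [MeasurableSpace S]
    [MeasurableSingletonClass S]
    (m k : ℕ) (hmS : Fintype.card S = m) (hm : 1 ≤ m) (hk : 2 ≤ k)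
    (X : Fin k → Ω → S) (hmeas : ∀ i, Measurable (X i))
    (hindep : iIndepFun X ℙ)
    (hunif : ∀ (i : Fin k) (s : S), (ℙ {ω | X i ω = s}).toReal = 1 / m)
    (ε : ℝ) (hε : 0 < ε) :
    variance (collisionCount k X) ℙ ≤ (k.choose 2 : ℝ) / m + (k : ℝ) ^ 3 / m ^ 2
    ∧ (ℙ {ω | ε * ((k.choose 2 : ℝ) / m)
          ≤ |collisionCount k X ω - (k.choose 2 : ℝ) / m|}).toReal
        ≤ (1 / ε ^ 2) * (16 * ((m : ℝ) / k ^ 2 + 1 / k)) := by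
  have hmpos : (0 : ℝ) < m := by exact_mod_cast (by omega : 0 < m)
  have hkpos : (0 : ℝ) < k := by exact_mod_cast (by omega : 0 < k)
  have hk2 : (2 : ℝ) ≤ k := by exact_mod_cast hk
  set P : Finset (Fin k × Fin k) := Finset.univ.filter (fun p => p.1 < p.2) with hP
  set A : Fin k × Fin k → Set Ω := fun p => {ω | X p.1 ω = X p.2 ω} with hA
  have hAmeas : ∀ p : Fin k × Fin k, MeasurableSet (A p) := by
    intro p
    have : A p = ⋃ s : S, (X p.1 ⁻¹' {s} ∩ X p.2 ⁻¹' {s}) := by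
      ext ω
      simp only [hA, Set.mem_setOf_eq, Set.mem_iUnion, Set.mem_inter_iff, Set.mem_preimage,
        Set.mem_singleton_iff]
      exact ⟨fun h => ⟨X p.1 ω, rfl, h.symm⟩, fun ⟨s, h1, h2⟩ => h1.trans h2.symm⟩
    rw [this]
    exact MeasurableSet.iUnion fun s =>
      ((hmeas p.1) (measurableSet_singleton s)).inter ((hmeas p.2) (measurableSet_singleton s))
  have hprod : ∀ p q : Fin k × Fin k,
      (fun ω => (if X p.1 ω = X p.2 ω then (1:ℝ) else 0) *
        (if X q.1 ω = X q.2 ω then (1:ℝ) else 0)) = (A p ∩ A q).indicator (fun _ => (1:ℝ)) := by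
    intro p q
    funext ω
    by_cases h1 : X p.1 ω = X p.2 ω <;> by_cases h2 : X q.1 ω = X q.2 ω <;>
      simp [Set.indicator_apply, hA, Set.mem_setOf_eq, h1, h2]
  have hone : ∀ p : Fin k × Fin k,
      (fun ω => (if X p.1 ω = X p.2 ω then (1:ℝ) else 0)) = (A p).indicator (fun _ => (1:ℝ)) := by
    intro p
    funext ω
    by_cases h1 : X p.1 ω = X p.2 ω <;> simp [Set.indicator_apply, hA, Set.mem_setOf_eq, h1]
  have hintg : ∀ p q : Fin k × Fin k, Integrable (fun ω =>
      (if X p.1 ω = X p.2 ω then (1:ℝ) else 0) * (if X q.1 ω = X q.2 ω then (1:ℝ) else 0)) ℙ := by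
    intro p q
    rw [hprod p q]
    exact (integrable_const (1:ℝ)).indicator ((hAmeas p).inter (hAmeas q))
  have hintg1 : ∀ p : Fin k × Fin k, Integrable (fun ω =>
      (if X p.1 ω = X p.2 ω then (1:ℝ) else 0)) ℙ := by
    intro p
    rw [hone p]
    exact (integrable_const (1:ℝ)).indicator (hAmeas p)
  have hint2 : ∀ p q : Fin k × Fin k, (∫ ω, (if X p.1 ω = X p.2 ω then (1:ℝ) else 0) *
      (if X q.1 ω = X q.2 ω then (1:ℝ) else 0) ∂ℙ) = (ℙ (A p ∩ A q)).toReal := by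
    intro p q
    rw [hprod p q, integral_indicator_const (1:ℝ) ((hAmeas p).inter (hAmeas q)), smul_eq_mul,
      mul_one, measureReal_def]
  have hint1 : ∀ p : Fin k × Fin k, (∫ ω, (if X p.1 ω = X p.2 ω then (1:ℝ) else 0) ∂ℙ)
      = (ℙ (A p)).toReal := by
    intro p
    rw [hone p, integral_indicator_const (1:ℝ) (hAmeas p), smul_eq_mul, mul_one, measureReal_def]
  have hPmem : ∀ p : Fin k × Fin k, p ∈ P → p.1 ≠ p.2 := by
    intro p hp
    have := (Finset.mem_filter.mp hp).2
    exact Fin.ne_of_lt this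
  -- diagonal value
  have hdiag : ∀ p : Fin k × Fin k, p ∈ P → (ℙ (A p)).toReal = 1 / m := by
    intro p hp
    rw [hA]
    rw [stmt11_pairProb hmS hm X hmeas hindep hunif (hPmem p hp)]
    rw [ENNReal.toReal_inv, ENNReal.toReal_natCast, one_div]
  -- off-diagonal bound
  have hoff : ∀ p ∈ P, ∀ q ∈ P, q ≠ p → (ℙ (A p ∩ A q)).toReal ≤ 1 / m ^ 2 := by
    intro p hp q hq hqp
    have hp12 := (Finset.mem_filter.mp hp).2
    have hq12 := (Finset.mem_filter.mp hq).2
    have key : ℙ (A p ∩ A q) ≤ ((m : ENNReal)⁻¹) ^ 2 := by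
      by_cases h11 : q.1 = p.1
      · have h22 : q.2 ≠ p.2 := fun h => hqp (Prod.ext h11 h)
        have h2q : p.1 ≠ q.2 := by
          intro h; rw [h11, h] at hq12; exact lt_irrefl _ hq12
        refine le_trans (measure_mono ?_) (stmt11_l3 hmS hm X hmeas hindep hunif
          (a := p.1) (b := p.2) (c := q.2) (Fin.ne_of_lt hp12) h2q (Ne.symm h22)) 
        rintro ω ⟨w1, w2⟩
        exact ⟨w1, by rw [← h11]; exact w2⟩
      by_cases h12 : q.1 = p.2
      · -- p.1 < p.2 = q.1 < q.2
        have hb : p.2 ≠ q.2 := by rw [← h12]; exact Fin.ne_of_lt hq12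
        have hc : p.1 ≠ q.2 := Fin.ne_of_lt (lt_trans hp12 (h12 ▸ hq12))
        refine le_trans (measure_mono ?_) (stmt11_l3 hmS hm X hmeas hindep hunif
          (a := p.2) (b := p.1) (c := q.2) (Fin.ne_of_lt hp12).symm hb hc)
        rintro ω ⟨w1, w2⟩
        exact ⟨w1.symm, by rw [← h12]; exact w2⟩
      by_cases h21 : q.2 = p.1
      · -- q.1 < q.2 = p.1 < p.2
        have hc : p.1 ≠ q.1 := (Fin.ne_of_lt (h21 ▸ hq12)).symm
        have hd : p.2 ≠ q.1 := (Fin.ne_of_lt (lt_trans (h21 ▸ hq12) hp12)).symm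
        refine le_trans (measure_mono ?_) (stmt11_l3 hmS hm X hmeas hindep hunif
          (a := p.1) (b := p.2) (c := q.1) (Fin.ne_of_lt hp12) hc hd)
        rintro ω ⟨w1, w2⟩
        exact ⟨w1, by rw [← h21]; exact w2.symm⟩
      by_cases h22 : q.2 = p.2
      · have hc : p.2 ≠ q.1 := fun h => absurd (h ▸ h22 ▸ hq12) (lt_irrefl _)
        have hd : p.1 ≠ q.1 := fun h => hqp (Prod.ext h.symm h22)
        refine le_trans (measure_mono ?_) (stmt11_l3 hmS hm X hmeas hindep hunif
          (a := p.2) (b := p.1) (c := q.1) (Fin.ne_of_lt hp12).symm hc hd)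
        rintro ω ⟨w1, w2⟩
        exact ⟨w1.symm, by rw [← h22]; exact w2.symm⟩
      · exact stmt11_l4 hmS hm X hmeas hindep hunif
          (Fin.ne_of_lt hp12) (fun h => h11 h.symm) (fun h => h21 h.symm)
          (fun h => h12 h.symm) (fun h => h22 h.symm) (Fin.ne_of_lt hq12)
    have hfin : ((m : ENNReal)⁻¹) ^ 2 ≠ ⊤ :=
      ENNReal.pow_ne_top (ENNReal.inv_ne_top.mpr (Nat.cast_ne_zero.mpr (by omega)))
    calc (ℙ (A p ∩ A q)).toReal ≤ (((m : ENNReal)⁻¹) ^ 2).toReal :=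
          ENNReal.toReal_mono hfin key
      _ = 1 / m ^ 2 := by
          rw [ENNReal.toReal_pow, ENNReal.toReal_inv, ENNReal.toReal_natCast, one_div]
          rw [inv_pow]
  -- expectation of C
  have hEC : (∫ ω, collisionCount k X ω ∂ℙ) = (k.choose 2 : ℝ) / m := by
    unfold collisionCount
    rw [integral_finset_sum _ (fun p _ => hintg1 p)]
    rw [Finset.sum_congr rfl (fun p hp => (hint1 p).trans (hdiag p hp))]
    rw [Finset.sum_const, stmt11_cardP k, nsmul_eq_mul, mul_one_div]
  -- C is measurable and bounded
  have hCmeas : Measurable (collisionCount k X) := by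
    unfold collisionCount
    exact Finset.measurable_sum _ fun p _ =>
      Measurable.ite (hAmeas p) measurable_const measurable_const
  have hCbdd : ∀ ω, ‖collisionCount k X ω‖ ≤ (k.choose 2 : ℝ) := by
    intro ω
    unfold collisionCount
    rw [Real.norm_eq_abs]
    calc |∑ p ∈ P, (if X p.1 ω = X p.2 ω then (1:ℝ) else 0)|
        ≤ ∑ p ∈ P, |(if X p.1 ω = X p.2 ω then (1:ℝ) else 0)| := Finset.abs_sum_le_sum_abs _ _
      _ ≤ ∑ _p ∈ P, (1:ℝ) := Finset.sum_le_sum fun p _ => by split_ifs <;> norm_num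
      _ = (k.choose 2 : ℝ) := by rw [Finset.sum_const, stmt11_cardP k, nsmul_eq_mul, mul_one]
  have hMem : MemLp (collisionCount k X) 2 ℙ :=
    MemLp.of_bound hCmeas.aestronglyMeasurable _ (ae_of_all _ hCbdd)
  -- variance bound
  set Nr : ℝ := (k.choose 2 : ℝ) with hNr
  have hNrpos : 0 < Nr := by
    have h0 : 0 < k.choose 2 := Nat.choose_pos hk
    rw [hNr]
    exact_mod_cast h0
  have hVar1 : variance (collisionCount k X) ℙ ≤ Nr / m := by
    rw [variance_eq_sub hMem, hEC]
    have hsq : (collisionCount k X ^ 2)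
        = fun ω => ∑ p ∈ P, ∑ q ∈ P, (if X p.1 ω = X p.2 ω then (1:ℝ) else 0) *
          (if X q.1 ω = X q.2 ω then (1:ℝ) else 0) := by
      funext ω
      rw [Pi.pow_apply, sq]
      unfold collisionCount
      rw [Finset.sum_mul_sum]
    have hEC2 : (∫ ω, (collisionCount k X ^ 2) ω ∂ℙ)
        = ∑ p ∈ P, ∑ q ∈ P, (ℙ (A p ∩ A q)).toReal := by
      rw [hsq]
      rw [integral_finset_sum _ (fun p _ => integrable_finset_sum _ (fun q _ => hintg p q))]
      refine Finset.sum_congr rfl fun p _ => ?_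
      rw [integral_finset_sum _ (fun q _ => hintg p q)]
      exact Finset.sum_congr rfl fun q _ => hint2 p q
    rw [hEC2]
    have hinner : ∀ p ∈ P, ∑ q ∈ P, (ℙ (A p ∩ A q)).toReal ≤ 1 / m + Nr * (1 / m ^ 2) := by
      intro p hp
      rw [← Finset.add_sum_erase _ _ hp]
      have h1 : (ℙ (A p ∩ A p)).toReal = 1 / m := by rw [Set.inter_self]; exact hdiag p hp
      rw [h1]
      refine add_le_add le_rfl ?_
      calc ∑ q ∈ P.erase p, (ℙ (A p ∩ A q)).toReal
          ≤ ∑ q ∈ P.erase p, (1 / (m:ℝ) ^ 2) := Finset.sum_le_sum fun q hq =>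
            hoff p hp q (Finset.mem_of_mem_erase hq) (Finset.ne_of_mem_erase hq)
        _ = (P.erase p).card * (1 / (m:ℝ) ^ 2) := by rw [Finset.sum_const, nsmul_eq_mul]
        _ ≤ Nr * (1 / m ^ 2) := by
            refine mul_le_mul_of_nonneg_right ?_ (by positivity)
            have : (P.erase p).card ≤ P.card := Finset.card_le_card (Finset.erase_subset _ _)
            have h2 : P.card = k.choose 2 := stmt11_cardP k
            rw [hNr]
            exact_mod_cast h2 ▸ this
    calc (∑ p ∈ P, ∑ q ∈ P, (ℙ (A p ∩ A q)).toReal) - ((k.choose 2 : ℝ) / m) ^ 2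
        ≤ (∑ _p ∈ P, (1 / (m:ℝ) + Nr * (1 / m ^ 2))) - ((k.choose 2 : ℝ) / m) ^ 2 := by
          exact sub_le_sub_right (Finset.sum_le_sum hinner) _
      _ = Nr * (1 / m + Nr * (1 / m ^ 2)) - (Nr / m) ^ 2 := by
          rw [Finset.sum_const, stmt11_cardP k, nsmul_eq_mul, hNr]
      _ = Nr / m := by field_simp; ring
  constructor
  · refine hVar1.trans ?_
    have : (0:ℝ) ≤ (k : ℝ) ^ 3 / m ^ 2 := by positivity
    linarith
  · -- Chebyshev
    have hc : 0 < ε * (Nr / m) := mul_pos hε (div_pos hNrpos hmpos)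
    have hcheb := meas_ge_le_variance_div_sq (μ := ℙ) hMem hc
    rw [hEC] at hcheb
    have hvnn : 0 ≤ variance (collisionCount k X) ℙ / (ε * (Nr / m)) ^ 2 :=
      div_nonneg (variance_nonneg _ _) (sq_nonneg _)
    calc (ℙ {ω | ε * ((k.choose 2 : ℝ) / m)
          ≤ |collisionCount k X ω - (k.choose 2 : ℝ) / m|}).toReal
        ≤ (ENNReal.ofReal (variance (collisionCount k X) ℙ / (ε * (Nr / m)) ^ 2)).toReal :=
          ENNReal.toReal_mono ENNReal.ofReal_ne_top hcheb
      _ = variance (collisionCount k X) ℙ / (ε * (Nr / m)) ^ 2 := ENNReal.toReal_ofReal hvnn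
      _ ≤ (Nr / m) / (ε * (Nr / m)) ^ 2 := by gcongr
      _ = (1 / ε ^ 2) * ((m : ℝ) / Nr) := by
          field_simp
      _ ≤ (1 / ε ^ 2) * (16 * ((m : ℝ) / k ^ 2 + 1 / k)) := by
          refine mul_le_mul_of_nonneg_left ?_ (by positivity)
          have hN4 : (k : ℝ) ^ 2 / 4 ≤ Nr := by
            rw [hNr, Nat.cast_choose_two]
            nlinarith
          have h1 : (m : ℝ) / Nr ≤ (m : ℝ) / ((k : ℝ) ^ 2 / 4) :=
            div_le_div_of_nonneg_left (le_of_lt hmpos) (by positivity) hN4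
          have h2 : (m : ℝ) / ((k : ℝ) ^ 2 / 4) = 4 * ((m : ℝ) / k ^ 2) := by
            field_simp
          have h3 : (0:ℝ) ≤ (m : ℝ) / k ^ 2 := by positivity
          have h4 : (0:ℝ) ≤ 1 / (k:ℝ) := by positivity
          calc (m : ℝ) / Nr ≤ 4 * ((m : ℝ) / k ^ 2) := h2 ▸ h1
            _ ≤ 16 * ((m : ℝ) / k ^ 2 + 1 / k) := by nlinarith
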